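/- Let A be a commutative C*-algebra and let I ⊆ J be two norm-closed ideals of A, each of which is essential in A (i.e. has nonzero intersection with every nonzero norm-closed ideal of A). Regard I and J as Hilbert A-modules with inner product ⟨a,b⟩ = a*·b. Then every bounded A-linear functional r : J → A (continuous, additive, r(x·a) = r(x)·a for all x ∈ J, a ∈ A) that vanishes on I is identically zero on J. -/

import Mathlib

/-- Let `A` be a commutative C*-algebra and `I ⊆ J` two norm-closed essential ideals of
`A`, regarded as Hilbert `A`-modules with `⟪a, b⟫ = a* ⬝ b`.  Then every bounded
`A`-linear functional `r : J → A` vanishing on `I` is identically zero on `J`. -/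
theorem functional_on_essential_ideal_vanishing_on_smaller_ideal_eq_zero
    {A : Type*} [CommCStarAlgebra A]
    (I J : Ideal A)
    (hIclosed : IsClosed (I : Set A)) (hJclosed : IsClosed (J : Set A))
    -- `I` and `J` are essential ideals of `A`
    (hIess : ∀ L : Ideal A, IsClosed (L : Set A) → L ≠ ⊥ → I ⊓ L ≠ ⊥)
    (hJess : ∀ L : Ideal A, IsClosed (L : Set A) → L ≠ ⊥ → J ⊓ L ≠ ⊥)
    -- `I ⊆ J`
    (hIJ : I ≤ J)
    -- `r` is a bounded `A`-linear functional on `J`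
    (r : J → A) (hrcont : Continuous r)
    (hradd : ∀ x y : J, r (x + y) = r x + r y)
    (hrmod : ∀ (x z : J) (a : A), (z : A) = (x : A) * a → r z = r x * a)
    -- `r` vanishes on `I`
    (hrI : ∀ x : J, (x : A) ∈ I → r x = 0) :
    ∀ x : J, r x = 0 := by
  intro x
  -- `r x` annihilates `I`
  have hb : ∀ a ∈ I, r x * a = 0 := by
    intro a ha
    have hxa : (x : A) * a ∈ J := J.mul_mem_right a x.2
    have hz : ((⟨(x : A) * a, hxa⟩ : J) : A) ∈ I := I.mul_mem_left _ ha
    have h := hrmod x ⟨(x : A) * a, hxa⟩ a rfl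
    rw [hrI _ hz] at h
    exact h.symm
  by_contra hne
  set b := r x with hbdef
  set L := (Ideal.span {b}).topologicalClosure with hL
  have hbL : b ∈ L :=
    Submodule.le_topologicalClosure _ (Ideal.mem_span_singleton_self b)
  have hLne : L ≠ ⊥ := by
    intro h
    exact hne (by simpa [h] using hbL)
  have hIL := hIess L (Submodule.isClosed_topologicalClosure _) hLne
  obtain ⟨c, hc, hc0⟩ := (Submodule.ne_bot_iff _).mp hIL
  have hcI : c ∈ I := hc.1
  have hcL : c ∈ L := hc.2
  have hbc : b * c = 0 := hb c hcI
  -- every element of `L` annihilates `c`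
  have hann : ∀ y ∈ L, y * c = 0 := by
    have hclosed : IsClosed {y : A | y * c = 0} :=
      isClosed_eq (continuous_id.mul continuous_const) continuous_const
    have hsub : (Ideal.span {b} : Set A) ⊆ {y : A | y * c = 0} := by
      intro y hy
      obtain ⟨d, rfl⟩ := Ideal.mem_span_singleton.mp hy
      show b * d * c = 0
      rw [mul_right_comm, hbc, zero_mul]
    have := closure_minimal hsub hclosed
    intro y hy
    exact this (by rw [← Submodule.topologicalClosure_coe]; exact hy)
  have hcc : c * c = 0 := hann c hcL
  -- In a C*-algebra, `c * c = 0` forces `c = 0` (using commutativity)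
  have hd : (star c * c) * (star c * c) = 0 := by
    have : (star c * c) * (star c * c) = star c * star c * (c * c) := by ring
    rw [this, hcc, mul_zero]
  have hsa : star (star c * c) = star c * c := by
    rw [star_mul, star_star]
  have hnd : ‖star c * c‖ = 0 := by
    have h1 : ‖star (star c * c) * (star c * c)‖ = ‖star c * c‖ * ‖star c * c‖ :=
      CStarRing.norm_star_mul_self
    rw [hsa, hd, norm_zero] at h1
    exact (mul_self_eq_zero.mp h1.symm)
  have : ‖c‖ * ‖c‖ = 0 := by
    rw [← CStarRing.norm_star_mul_self, hnd]
  exact hc0 (norm_eq_zero.mp (mul_self_eq_zero.mp this))
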